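/- Let W : ℝ → ℝ be continuous and nonnegative, and let ψ : ℝ → ℝ be differentiable and strictly increasing with ψ'(z) = √(2W(ψ(z))) for every z ∈ ℝ, and with ψ(z) → 1 as z → +∞ and ψ(z) → −1 as z → −∞. Then ∫_ℝ ψ'(z)² dz = ∫_{−1}^{1} √(2W(t)) dt; in particular the energy ∫_ℝ ψ'(z)² dz is finite. -/
import Mathlib


open Filter MeasureTheory

theorem energy_of_heteroclinic_profile (W ψ : ℝ → ℝ)
    (hWc : Continuous W) (hWnn : ∀ t : ℝ, 0 ≤ W t)
    (hψ : Differentiable ℝ ψ) (hmono : StrictMono ψ)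
    (hode : ∀ z : ℝ, deriv ψ z = Real.sqrt (2 * W (ψ z)))
    (htop : Tendsto ψ atTop (nhds 1))
    (hbot : Tendsto ψ atBot (nhds (-1))) :
    Integrable (fun z : ℝ => (deriv ψ z) ^ 2) ∧
    (∫ z : ℝ, (deriv ψ z) ^ 2) = ∫ t in (-1 : ℝ)..1, Real.sqrt (2 * W t) := by
  set g : ℝ → ℝ := fun t => Real.sqrt (2 * W t) with hg_def
  have hgc : Continuous g := (continuous_const.mul hWc).sqrt
  have hgnn : ∀ t, 0 ≤ g t := fun t => Real.sqrt_nonneg _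
  have hψc : Continuous ψ := hψ.continuous
  have hderiv_eq : deriv ψ = fun z => g (ψ z) := funext hode
  have hderiv_cont : Continuous (deriv ψ) := by
    rw [hderiv_eq]; exact hgc.comp hψc
  have hf_cont : Continuous (fun z : ℝ => (deriv ψ z) ^ 2) := hderiv_cont.pow 2
  have hf_nn : ∀ z, 0 ≤ (deriv ψ z) ^ 2 := fun z => sq_nonneg _
  -- bounds on ψ
  have hle1 : ∀ z, ψ z ≤ 1 := by
    intro z
    refine ge_of_tendsto htop ?_
    filter_upwards [eventually_ge_atTop z] with y hy
    exact hmono.monotone hy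
  have hge1 : ∀ z, -1 ≤ ψ z := by
    intro z
    refine le_of_tendsto hbot ?_
    filter_upwards [eventually_le_atBot z] with y hy
    exact hmono.monotone hy
  -- change of variables on intervals
  have key : ∀ a b : ℝ, (∫ z in a..b, (deriv ψ z) ^ 2) = ∫ t in ψ a..ψ b, g t := by
    intro a b
    have := intervalIntegral.integral_comp_smul_deriv
      (f := ψ) (f' := deriv ψ) (g := g) (a := a) (b := b)
      (fun x _ => (hψ x).hasDerivAt) hderiv_cont.continuousOn hgc
    rw [← this]
    apply intervalIntegral.integral_congr
    intro x _
    simp only [smul_eq_mul, Function.comp_apply, hode x, sq, hg_def]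
  have hgint : IntervalIntegrable g volume (-1) 1 := hgc.intervalIntegrable _ _
  have hbound : ∀ n : ℕ, (∫ z in (-(n:ℝ))..(n:ℝ), (deriv ψ z) ^ 2) ≤ ∫ t in (-1:ℝ)..1, g t := by
    intro n
    rw [key]
    refine intervalIntegral.integral_mono_interval (hge1 _) (hmono.monotone ?_) (hle1 _) ?_ hgint
    · simp [neg_le_self_iff, Nat.cast_nonneg]
    · exact Filter.Eventually.of_forall hgnn
  have hIoc : ∀ n : ℕ, IntegrableOn (fun z : ℝ => (deriv ψ z) ^ 2) (Set.Ioc (-(n:ℝ)) (n:ℝ)) volume :=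
    fun n => hf_cont.integrableOn_Ioc
  have ha : Tendsto (fun n : ℕ => -(n:ℝ)) atTop atBot :=
    tendsto_neg_atBot_iff.mpr tendsto_natCast_atTop_atTop
  have hb : Tendsto (fun n : ℕ => (n:ℝ)) atTop atTop := tendsto_natCast_atTop_atTop
  have hint : Integrable (fun z : ℝ => (deriv ψ z) ^ 2) := by
    refine integrable_of_intervalIntegral_norm_bounded (∫ t in (-1:ℝ)..1, g t) hIoc ha hb ?_
    filter_upwards with n
    have : (∫ z in (-(n:ℝ))..(n:ℝ), ‖(deriv ψ z) ^ 2‖) = ∫ z in (-(n:ℝ))..(n:ℝ), (deriv ψ z) ^ 2 := by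
      apply intervalIntegral.integral_congr
      intro x _
      exact Real.norm_of_nonneg (hf_nn x)
    rw [this]
    exact hbound n
  refine ⟨hint, ?_⟩
  -- limit of interval integrals
  have h1 : Tendsto (fun n : ℕ => ∫ z in (-(n:ℝ))..(n:ℝ), (deriv ψ z) ^ 2) atTop
      (nhds (∫ z : ℝ, (deriv ψ z) ^ 2)) :=
    intervalIntegral_tendsto_integral hint ha hb
  -- primitive of g
  set F : ℝ → ℝ := fun x => ∫ t in (-1:ℝ)..x, g t with hF_def
  have hFcont : Continuous F :=
    intervalIntegral.continuous_primitive (fun a b => hgc.intervalIntegrable a b) (-1)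
  have hsub : ∀ a b : ℝ, F b - F a = ∫ t in a..b, g t := by
    intro a b
    exact intervalIntegral.integral_interval_sub_left (hgc.intervalIntegrable _ _)
      (hgc.intervalIntegrable _ _)
  have h2 : Tendsto (fun n : ℕ => ∫ t in ψ (-(n:ℝ))..ψ (n:ℝ), g t) atTop
      (nhds (∫ t in (-1:ℝ)..1, g t)) := by
    have hψtop : Tendsto (fun n : ℕ => ψ (n:ℝ)) atTop (nhds 1) := htop.comp hb
    have hψbot : Tendsto (fun n : ℕ => ψ (-(n:ℝ))) atTop (nhds (-1)) := hbot.comp ha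
    have := ((hFcont.tendsto 1).comp hψtop).sub ((hFcont.tendsto (-1)).comp hψbot)
    have hF1 : F 1 - F (-1) = ∫ t in (-1:ℝ)..1, g t := hsub _ _
    rw [hF1] at this
    refine this.congr fun n => hsub _ _
  have h3 : Tendsto (fun n : ℕ => ∫ z in (-(n:ℝ))..(n:ℝ), (deriv ψ z) ^ 2) atTop
      (nhds (∫ t in (-1:ℝ)..1, g t)) := by
    refine h2.congr fun n => (key _ _).symm
  exact tendsto_nhds_unique h1 h3
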